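/- Let 0 < ε ≤ 1/2, let X ⊆ ℝ^d be finite and (k,ε)-irreducible with optimal k-means partition X₁,…,X_k, let 1 ≤ i < k, and let C_i be a set of i centers satisfying the invariant P(i). Then for every l ∈ {i+1,…,k} and every x ∈ X_l, Φ(C_i,{x})/Φ(C_i,X_l) ≥ (ε/64)·(1/m_l). -/

import Mathlib

open Finset
open scoped BigOperators
open Classical

noncomputable section

/-- Points of `ℝ^d`. -/
abbrev Pt (d : ℕ) := EuclideanSpace ℝ (Fin d)

/-- `Φ(C, X) = Σ_{x ∈ X} min_{c ∈ C} ‖x - c‖²`. -/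
noncomputable def Phi {d : ℕ} (C X : Finset (Pt d)) : ℝ :=
  ∑ x ∈ X, sInf ((fun c => ‖x - c‖ ^ 2) '' (C : Set (Pt d)))

/-- The centroid `μ(X)` of a finite set of points. -/
noncomputable def ctr {d : ℕ} (X : Finset (Pt d)) : Pt d :=
  (X.card : ℝ)⁻¹ • ∑ x ∈ X, x

/-- `Δ₁(X) = Φ({μ(X)}, X)`. -/
noncomputable def Delta1 {d : ℕ} (X : Finset (Pt d)) : ℝ := Phi {ctr X} X

/-- `Δ_k(X)`: the optimal `k`-means cost of `X`. -/
noncomputable def DeltaK {d : ℕ} (k : ℕ) (X : Finset (Pt d)) : ℝ :=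
  sInf ((fun C => Phi C X) '' {C : Finset (Pt d) | C.card = k})

/-- `X₁, …, X_k` is an optimal `k`-means partition of `X`. -/
def IsOptPartition {d : ℕ} (k : ℕ) (X : Finset (Pt d)) (Xs : Fin k → Finset (Pt d)) : Prop :=
  (∀ j, (Xs j).Nonempty) ∧
  (∀ j l, j ≠ l → Disjoint (Xs j) (Xs l)) ∧
  Finset.univ.biUnion Xs = X ∧
  ∑ j, Delta1 (Xs j) = DeltaK k X

/-- `X` is `(k, ε)`-irreducible: `Δ_{k-1}(X) ≥ (1+ε)·Δ_k(X)`. -/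
def KIrreducible {d : ℕ} (k : ℕ) (ε : ℝ) (X : Finset (Pt d)) : Prop :=
  (1 + ε) * DeltaK k X ≤ DeltaK (k - 1) X

/-- The invariant `P(i)`: `Ci` consists of the centers `c r` for `r < i` (clusters reindexed
so that the covered clusters come first), each `c r` is a `(1 + ε/16)`-good center for the
optimal cluster `Xs r`, and `Φ(Ci, X) > 0`. -/
def InvariantP {d k : ℕ} (ε : ℝ) (X : Finset (Pt d)) (Xs : Fin k → Finset (Pt d))
    (i : ℕ) (c : Fin k → Pt d) (Ci : Finset (Pt d)) : Prop :=
  Ci = Finset.image c (Finset.univ.filter (fun r : Fin k => r.val < i)) ∧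
  (∀ r : Fin k, r.val < i → Phi {c r} (Xs r) ≤ (1 + ε / 16) * Delta1 (Xs r)) ∧
  0 < Phi Ci X

namespace Stmt9Aux

open scoped RealInnerProductSpace

variable {d : ℕ}

lemma sInf_img_nonneg (C : Finset (Pt d)) (x : Pt d) :
    0 ≤ sInf ((fun c => ‖x - c‖ ^ 2) '' (C : Set (Pt d))) := by
  apply Real.sInf_nonneg
  rintro y ⟨c, -, rfl⟩; positivity

lemma phi_nonneg (C X : Finset (Pt d)) : 0 ≤ Phi C X :=
  Finset.sum_nonneg fun x _ => sInf_img_nonneg C x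

lemma phi_singleton_center (c : Pt d) (X : Finset (Pt d)) :
    Phi {c} X = ∑ x ∈ X, ‖x - c‖ ^ 2 := by
  unfold Phi
  refine Finset.sum_congr rfl fun x _ => ?_
  rw [Finset.coe_singleton, Set.image_singleton, csInf_singleton]

lemma phi_anti {C C' : Finset (Pt d)} (h : C ⊆ C') (hC : C.Nonempty) (X : Finset (Pt d)) :
    Phi C' X ≤ Phi C X := by
  refine Finset.sum_le_sum fun x _ => ?_
  apply csInf_le_csInf
  · exact ⟨0, by rintro y ⟨c, -, rfl⟩; positivity⟩
  · exact (hC.to_set.image _)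
  · exact Set.image_mono (by exact_mod_cast h)

lemma phi_le_of_mem {C : Finset (Pt d)} {s : Pt d} (hs : s ∈ C) (X : Finset (Pt d)) :
    Phi C X ≤ Phi {s} X :=
  phi_anti (Finset.singleton_subset_iff.mpr hs) ⟨s, Finset.mem_singleton_self s⟩ X

lemma phi_point (C : Finset (Pt d)) (x : Pt d) :
    Phi C {x} = sInf ((fun c => ‖x - c‖ ^ 2) '' (C : Set (Pt d))) := by
  unfold Phi; rw [Finset.sum_singleton]

lemma phi_point_le {C : Finset (Pt d)} {c : Pt d} (hc : c ∈ C) (x : Pt d) :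
    Phi C {x} ≤ ‖x - c‖ ^ 2 := by
  rw [phi_point]
  exact csInf_le ⟨0, by rintro y ⟨c', -, rfl⟩; positivity⟩ ⟨c, hc, rfl⟩

lemma phi_point_exists {C : Finset (Pt d)} (hC : C.Nonempty) (x : Pt d) :
    ∃ c ∈ C, Phi C {x} = ‖x - c‖ ^ 2 := by
  rw [phi_point]
  have hfin : ((fun c => ‖x - c‖ ^ 2) '' (C : Set (Pt d))).Finite :=
    (C.finite_toSet).image _
  have hne : ((fun c => ‖x - c‖ ^ 2) '' (C : Set (Pt d))).Nonempty :=
    (hC.to_set).image _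
  obtain ⟨c, hc, h⟩ := hne.csInf_mem hfin
  exact ⟨c, hc, h.symm⟩

lemma phi_erase (C : Finset (Pt d)) {x : Pt d} {X : Finset (Pt d)} (hx : x ∈ X) :
    Phi C X = Phi C {x} + Phi C (X.erase x) := by
  unfold Phi
  rw [Finset.sum_singleton, ← Finset.add_sum_erase _ _ hx]

lemma phi_biUnion {k : ℕ} (C : Finset (Pt d)) (Xs : Fin k → Finset (Pt d))
    (hdisj : ∀ j l, j ≠ l → Disjoint (Xs j) (Xs l)) :
    Phi C (Finset.univ.biUnion Xs) = ∑ j, Phi C (Xs j) := by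
  unfold Phi
  exact Finset.sum_biUnion fun j _ l _ h => hdisj j l h

lemma sum_sub_ctr {X : Finset (Pt d)} (hX : X.Nonempty) :
    ∑ x ∈ X, (x - ctr X) = 0 := by
  have hc : (X.card : ℝ) ≠ 0 := by
    exact_mod_cast Finset.card_ne_zero_of_mem hX.choose_spec
  rw [Finset.sum_sub_distrib, Finset.sum_const, sub_eq_zero, ctr,
    ← Nat.cast_smul_eq_nsmul ℝ, smul_smul, mul_inv_cancel₀ hc, one_smul]

lemma biasvar {X : Finset (Pt d)} (hX : X.Nonempty) (c : Pt d) :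
    ∑ x ∈ X, ‖x - c‖ ^ 2
      = (∑ x ∈ X, ‖x - ctr X‖ ^ 2) + (X.card : ℝ) * ‖ctr X - c‖ ^ 2 := by
  have h1 : ∀ x ∈ X, ‖x - c‖ ^ 2
      = ‖x - ctr X‖ ^ 2 + (2 * ⟪x - ctr X, ctr X - c⟫ + ‖ctr X - c‖ ^ 2) := by
    intro x _
    have hxc : x - c = (x - ctr X) + (ctr X - c) := by abel
    rw [hxc, @norm_add_sq_real]; ring
  rw [Finset.sum_congr rfl h1, Finset.sum_add_distrib, Finset.sum_add_distrib,
    ← Finset.mul_sum, ← sum_inner, sum_sub_ctr hX, inner_zero_left,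
    Finset.sum_const, nsmul_eq_mul]
  ring

lemma delta1_eq (X : Finset (Pt d)) : Delta1 X = ∑ x ∈ X, ‖x - ctr X‖ ^ 2 :=
  phi_singleton_center _ _

lemma phi_singleton_eq {X : Finset (Pt d)} (hX : X.Nonempty) (c : Pt d) :
    Phi {c} X = Delta1 X + (X.card : ℝ) * ‖ctr X - c‖ ^ 2 := by
  rw [phi_singleton_center, biasvar hX, delta1_eq]

lemma infinite_of_ne {x y : Pt d} (h : x ≠ y) : Infinite (Pt d) := by
  refine Infinite.of_injective (fun n : ℕ => x + (n : ℝ) • (y - x)) ?_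
  intro a b hab
  have hyx : y - x ≠ 0 := sub_ne_zero.mpr h.symm
  simp only [add_right_inj] at hab
  have h2 : ((a : ℝ) - (b : ℝ)) • (y - x) = 0 := by rw [sub_smul, hab, sub_self]
  rcases smul_eq_zero.mp h2 with h3 | h3
  · have : (a : ℝ) = (b : ℝ) := by linarith [sub_eq_zero.mp h3]
    exact_mod_cast this
  · exact absurd h3 hyx

lemma deltaK_le_phi [Infinite (Pt d)] {S : Finset (Pt d)} (hS : S.Nonempty) {n : ℕ}
    (hn : S.card ≤ n) (X : Finset (Pt d)) : DeltaK n X ≤ Phi S X := by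
  obtain ⟨C, hSC, hcard⟩ := Infinite.exists_superset_card_eq S n hn
  calc DeltaK n X ≤ Phi C X := by
        apply csInf_le
        · exact ⟨0, by rintro y ⟨C', -, rfl⟩; exact phi_nonneg _ _⟩
        · exact ⟨C, hcard, rfl⟩
    _ ≤ Phi S X := phi_anti hSC hS X


lemma merge_iden {mr ml M2 : ℝ} (hmr : 0 < mr) (hml : 0 < ml) :
    mr * ((ml / (mr + ml)) ^ 2 * M2) + ml * ((mr / (mr + ml)) ^ 2 * M2)
      = M2 * (mr * ml) / (mr + ml) := by
  have h : mr + ml ≠ 0 := by positivity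
  field_simp
  ring

lemma numeric {ε T mr ml D b A Φl Δl M : ℝ}
    (hε0 : 0 < ε) (hε : ε ≤ 1 / 2) (hT0 : 0 ≤ T)
    (hmr : 1 ≤ mr) (hml : 1 ≤ ml)
    (hΔl0 : 0 ≤ Δl) (hΔlT : Δl ≤ T)
    (hD0 : 0 ≤ D) (hb0 : 0 ≤ b) (hA0 : 0 ≤ A) (hM0 : 0 ≤ M)
    (hbr : 16 * mr * b ^ 2 ≤ ε * T)
    (hMerge : ε * T * (mr + ml) ≤ M ^ 2 * (mr * ml))
    (htriA : A ≤ 2 * D + b) (htriM : M ≤ 2 * D + 2 * b)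
    (hUp : Φl ≤ Δl + ml * A ^ 2) :
    ε * Φl ≤ 64 * (ml * D ^ 2) := by
  have hmr0 : 0 < mr := lt_of_lt_of_le one_pos hmr
  have hml0 : 0 < ml := lt_of_lt_of_le one_pos hml
  have h1 : M * M ≤ (2 * D + 2 * b) * (2 * D + 2 * b) := mul_self_le_mul_self hM0 htriM
  have hMM : M ^ 2 ≤ 8 * D ^ 2 + 8 * b ^ 2 := by nlinarith [sq_nonneg (D - b), h1]
  have hεT0 : 0 ≤ ε * T := mul_nonneg hε0.le hT0
  have hεTr : ε * T ≤ M ^ 2 * mr := by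
    have h0 : 0 ≤ (ε * T) * mr := mul_nonneg hεT0 hmr0.le
    have h2 : (ε * T) * ml ≤ (M ^ 2 * mr) * ml := by linarith only [hMerge, h0]
    exact le_of_mul_le_mul_right h2 hml0
  have hεTl : ε * T ≤ M ^ 2 * ml := by
    have h0 : 0 ≤ (ε * T) * ml := mul_nonneg hεT0 hml0.le
    have h2 : (ε * T) * mr ≤ (M ^ 2 * ml) * mr := by linarith only [hMerge, h0]
    exact le_of_mul_le_mul_right h2 hmr0
  have hMMr : M ^ 2 * mr ≤ (8 * D ^ 2 + 8 * b ^ 2) * mr :=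
    mul_le_mul_of_nonneg_right hMM hmr0.le
  have h3 : (8 * b ^ 2) * mr ≤ (8 * D ^ 2) * mr := by linarith only [hbr, hεTr, hMMr]
  have hb2D2 : b ^ 2 ≤ D ^ 2 := by
    have h4 := le_of_mul_le_mul_right h3 hmr0
    linarith only [h4]
  have hbD : b ≤ D := by nlinarith [hb2D2, hD0, hb0]
  have hA3 : A ≤ 3 * D := by linarith only [htriA, hbD]
  have hA9 : A ^ 2 ≤ 9 * D ^ 2 := by
    have h5 := mul_self_le_mul_self hA0 hA3
    nlinarith [h5]
  have hMMl : M ^ 2 * ml ≤ (8 * D ^ 2 + 8 * b ^ 2) * ml :=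
    mul_le_mul_of_nonneg_right hMM hml0.le
  have hbml : b ^ 2 * ml ≤ D ^ 2 * ml := mul_le_mul_of_nonneg_right hb2D2 hml0.le
  have hεT16 : ε * T ≤ 16 * ml * D ^ 2 := by linarith only [hεTl, hMMl, hbml]
  have e1 : ε * Φl ≤ ε * Δl + ε * (ml * A ^ 2) := by
    have h6 := mul_le_mul_of_nonneg_left hUp hε0.le
    linarith only [h6]
  have e2 : ε * (ml * A ^ 2) ≤ ε * (ml * (9 * D ^ 2)) :=
    mul_le_mul_of_nonneg_left (mul_le_mul_of_nonneg_left hA9 hml0.le) hε0.le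
  have e3 : ε * Δl ≤ ε * T := mul_le_mul_of_nonneg_left hΔlT hε0.le
  have h5 : 0 ≤ ml * (9 * D ^ 2) := by positivity
  have e4 : ε * (ml * (9 * D ^ 2)) ≤ 1 / 2 * (ml * (9 * D ^ 2)) :=
    mul_le_mul_of_nonneg_right hε h5
  linarith only [e1, e2, e3, e4, hεT16, h5]


end Stmt9Aux

open Stmt9Aux in
set_option maxHeartbeats 1000000 in
/-- Under the invariant `P(i)` (clusters reindexed so the covered clusters
are `X₁, …, X_i`), for every uncovered cluster `X_l`, `l ∈ {i+1, …, k}`, and every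
`x ∈ X_l`, `Φ(C_i, {x})/Φ(C_i, X_l) ≥ (ε/64)·(1/m_l)`. -/
theorem stmt_9 {d k : ℕ} (ε : ℝ) (hε0 : 0 < ε) (hε : ε ≤ 1 / 2)
    (X : Finset (Pt d)) (hirr : KIrreducible k ε X)
    (Xs : Fin k → Finset (Pt d)) (hopt : IsOptPartition k X Xs)
    (i : ℕ) (hi : 1 ≤ i) (hik : i < k)
    (c : Fin k → Pt d) (Ci : Finset (Pt d)) (hinv : InvariantP ε X Xs i c Ci) :
    ∀ l : Fin k, i ≤ l.val → ∀ x ∈ Xs l,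
      (ε / 64) * (1 / ((Xs l).card : ℝ)) ≤ Phi Ci {x} / Phi Ci (Xs l) := by
  obtain ⟨hCi, hgood, hPhiX⟩ := hinv
  obtain ⟨hne, hdisj, hunion, hsumT⟩ := hopt
  intro l hl x hx
  set T : ℝ := ∑ j, Delta1 (Xs j) with hT
  have hTK : DeltaK k X = T := hsumT.symm
  have hD1nn : ∀ j, 0 ≤ Delta1 (Xs j) := fun j => phi_nonneg _ _
  have hT0 : 0 ≤ T := Finset.sum_nonneg fun j _ => hD1nn j
  have hDlT : ∀ j : Fin k, Delta1 (Xs j) ≤ T := fun j =>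
    Finset.single_le_sum (fun j _ => hD1nn j) (Finset.mem_univ j)
  have hm1 : ∀ j : Fin k, (1 : ℝ) ≤ ((Xs j).card : ℝ) := fun j => by
    exact_mod_cast Finset.card_pos.mpr (hne j)
  have hm0 : ∀ j : Fin k, (0 : ℝ) < ((Xs j).card : ℝ) := fun j =>
    lt_of_lt_of_le one_pos (hm1 j)
  -- infinitely many points in the space
  haveI : Infinite (Pt d) := by
    obtain ⟨y, hy⟩ := hne ⟨0, by omega⟩
    have hly : l ≠ ⟨0, by omega⟩ := by
      intro h; rw [h] at hl; simp at hl; omega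
    have hxy : x ≠ y := by
      intro h
      exact (Finset.disjoint_left.mp (hdisj l ⟨0, by omega⟩ hly)) hx (h ▸ hy)
    exact infinite_of_ne hxy
  -- Ci is nonempty
  have hCiNe : Ci.Nonempty := by
    refine ⟨c ⟨0, by omega⟩, ?_⟩
    rw [hCi]
    exact Finset.mem_image_of_mem c (by simp; omega)
  -- every point is at least as close to its own centroid as to other centroids
  have hassign : ∀ r : Fin k, ‖x - ctr (Xs l)‖ ≤ ‖x - ctr (Xs r)‖ := by
    intro r
    rcases eq_or_ne r l with rfl | hrl
    · exact le_refl _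
    by_contra hcon
    push_neg at hcon
    have hsq : ‖x - ctr (Xs r)‖ ^ 2 < ‖x - ctr (Xs l)‖ ^ 2 := by
      nlinarith [norm_nonneg (x - ctr (Xs r)), norm_nonneg (x - ctr (Xs l))]
    set S := Finset.image (fun j => ctr (Xs j)) Finset.univ with hS
    have hSne : S.Nonempty := ⟨ctr (Xs l), Finset.mem_image_of_mem _ (Finset.mem_univ l)⟩
    have hScard : S.card ≤ k := le_trans Finset.card_image_le (by simp)
    have h1 : DeltaK k X ≤ Phi S X := deltaK_le_phi hSne hScard X
    have h2 : Phi S X = ∑ j, Phi S (Xs j) := by rw [← hunion]; exact phi_biUnion S Xs hdisj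
    have h5 : ∑ j, Phi S (Xs j)
        = Phi S (Xs l) + ∑ j ∈ Finset.univ.erase l, Phi S (Xs j) :=
      (Finset.add_sum_erase Finset.univ (fun j => Phi S (Xs j)) (Finset.mem_univ l)).symm
    have h3 : ∑ j ∈ Finset.univ.erase l, Phi S (Xs j)
        ≤ ∑ j ∈ Finset.univ.erase l, Delta1 (Xs j) :=
      Finset.sum_le_sum fun j _ =>
        phi_le_of_mem (Finset.mem_image_of_mem _ (Finset.mem_univ j)) _
    have h6 : Delta1 (Xs l) + ∑ j ∈ Finset.univ.erase l, Delta1 (Xs j)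
        = ∑ j, Delta1 (Xs j) :=
      Finset.add_sum_erase Finset.univ (fun j => Delta1 (Xs j)) (Finset.mem_univ l)
    have h7 : T = ∑ j, Delta1 (Xs j) := hT
    have h4 : Phi S (Xs l) ≤ ‖x - ctr (Xs r)‖ ^ 2 + (Delta1 (Xs l) - ‖x - ctr (Xs l)‖ ^ 2) := by
      rw [phi_erase S hx]
      have ha : Phi S {x} ≤ ‖x - ctr (Xs r)‖ ^ 2 :=
        phi_point_le (Finset.mem_image_of_mem _ (Finset.mem_univ r)) x
      have hc1 : Phi S ((Xs l).erase x) ≤ Phi {ctr (Xs l)} ((Xs l).erase x) :=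
        phi_le_of_mem (Finset.mem_image_of_mem _ (Finset.mem_univ l)) _
      have hc2 : Phi {ctr (Xs l)} ((Xs l).erase x)
          = Delta1 (Xs l) - ‖x - ctr (Xs l)‖ ^ 2 := by
        rw [phi_singleton_center]
        have hadd : ‖x - ctr (Xs l)‖ ^ 2 + ∑ y ∈ (Xs l).erase x, ‖y - ctr (Xs l)‖ ^ 2
            = ∑ y ∈ Xs l, ‖y - ctr (Xs l)‖ ^ 2 :=
          Finset.add_sum_erase (Xs l) (fun y => ‖y - ctr (Xs l)‖ ^ 2) hx
        have hdel : Delta1 (Xs l) = ∑ y ∈ Xs l, ‖y - ctr (Xs l)‖ ^ 2 := delta1_eq _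
        linarith
      linarith
    rw [hTK] at h1
    linarith
  -- the uncovered cluster is expensive for Ci
  have hLow : Delta1 (Xs l) + 15 / 16 * ε * T ≤ Phi Ci (Xs l) := by
    set F1 := Finset.univ.filter (fun j : Fin k => j.val < i) with hF1
    set F2 := Finset.univ.filter (fun j : Fin k => ¬ j.val < i) with hF2
    set G := Finset.univ.filter (fun j : Fin k => i ≤ j.val ∧ j ≠ l) with hG
    set S := Ci ∪ Finset.image (fun j => ctr (Xs j)) G with hS
    have hCiS : Ci ⊆ S := Finset.subset_union_left
    have hSne : S.Nonempty := ⟨_, hCiS hCiNe.choose_spec⟩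
    have hcF1 : F1.card ≤ i := by
      have h : F1.card ≤ (Finset.univ : Finset (Fin i)).card := by
        refine Finset.card_le_card_of_injOn
          (fun j : Fin k => (⟨j.val % i, Nat.mod_lt _ (by omega)⟩ : Fin i))
          (fun a _ => Finset.mem_univ _) ?_
        intro a ha b hb hab
        have ha' : a.val < i := (Finset.mem_filter.mp (Finset.mem_coe.mp ha)).2
        have hb' : b.val < i := (Finset.mem_filter.mp (Finset.mem_coe.mp hb)).2
        have hv := congrArg Fin.val hab
        simp only [Nat.mod_eq_of_lt ha', Nat.mod_eq_of_lt hb'] at hv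
        exact Fin.ext hv
      simpa using h
    have hcG : G.card ≤ k - i - 1 := by
      have hli : l.val - i < k - i := by omega
      have h : G.card ≤ ((Finset.univ : Finset (Fin (k - i))).erase ⟨l.val - i, hli⟩).card := by
        refine Finset.card_le_card_of_injOn
          (fun j : Fin k => (⟨j.val - i, by have := j.isLt; omega⟩ : Fin (k - i))) ?_ ?_
        · intro a ha
          have ha' := (Finset.mem_filter.mp ha).2
          refine Finset.mem_erase.mpr ⟨?_, Finset.mem_univ _⟩
          intro hc
          have hv := congrArg Fin.val hc
          simp only at hv
          exact ha'.2 (Fin.ext (by omega))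
        · intro a ha b hb hab
          have ha' := (Finset.mem_filter.mp (Finset.mem_coe.mp ha)).2
          have hb' := (Finset.mem_filter.mp (Finset.mem_coe.mp hb)).2
          have hv := congrArg Fin.val hab
          simp only at hv
          exact Fin.ext (by omega)
      have hc : ((Finset.univ : Finset (Fin (k - i))).erase ⟨l.val - i, hli⟩).card
          = (k - i) - 1 := by
        rw [Finset.card_erase_of_mem (Finset.mem_univ _)]
        simp
      omega
    have hScard : S.card ≤ k - 1 := by
      have h1 : S.card ≤ Ci.card + (Finset.image (fun j => ctr (Xs j)) G).card := by
        rw [hS]; exact Finset.card_union_le _ _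
      have h2 : Ci.card ≤ F1.card := by rw [hCi]; exact Finset.card_image_le
      have h3 : (Finset.image (fun j => ctr (Xs j)) G).card ≤ G.card :=
        Finset.card_image_le
      omega
    have h1 : DeltaK (k - 1) X ≤ Phi S X := deltaK_le_phi hSne hScard X
    have h2 : Phi S X = ∑ j, Phi S (Xs j) := by rw [← hunion]; exact phi_biUnion S Xs hdisj
    have h3 : ∑ j, Phi S (Xs j) = ∑ j ∈ F1, Phi S (Xs j) + ∑ j ∈ F2, Phi S (Xs j) :=
      (Finset.sum_filter_add_sum_filter_not Finset.univ _ _).symm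
    have hlF2 : l ∈ F2 := by
      rw [hF2]; refine Finset.mem_filter.mpr ⟨Finset.mem_univ _, by omega⟩
    have h4 : ∑ j ∈ F2, Phi S (Xs j)
        = Phi S (Xs l) + ∑ j ∈ F2.erase l, Phi S (Xs j) :=
      (Finset.add_sum_erase F2 (fun j => Phi S (Xs j)) hlF2).symm
    have hb1 : ∑ j ∈ F1, Phi S (Xs j) ≤ ∑ j ∈ F1, (1 + ε / 16) * Delta1 (Xs j) := by
      refine Finset.sum_le_sum fun j hj => ?_
      have hji : j.val < i := (Finset.mem_filter.mp hj).2
      have hcj : c j ∈ S := hCiS (by rw [hCi]; exact Finset.mem_image_of_mem c hj)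
      exact le_trans (phi_le_of_mem hcj _) (hgood j hji)
    have hb2 : ∑ j ∈ F2.erase l, Phi S (Xs j) ≤ ∑ j ∈ F2.erase l, Delta1 (Xs j) := by
      refine Finset.sum_le_sum fun j hj => ?_
      obtain ⟨hjl, hjF2⟩ := Finset.mem_erase.mp hj
      have hji : ¬ j.val < i := (Finset.mem_filter.mp hjF2).2
      have hctr : ctr (Xs j) ∈ S := Finset.mem_union_right _
        (Finset.mem_image_of_mem _
          (Finset.mem_filter.mpr ⟨Finset.mem_univ _, ⟨by omega, hjl⟩⟩))
      exact phi_le_of_mem hctr _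
    have hb3 : Phi S (Xs l) ≤ Phi Ci (Xs l) := phi_anti hCiS hCiNe _
    have hd1 : T = ∑ j ∈ F1, Delta1 (Xs j) + ∑ j ∈ F2, Delta1 (Xs j) := by
      rw [hT]; exact (Finset.sum_filter_add_sum_filter_not Finset.univ _ _).symm
    have hd2 : ∑ j ∈ F2, Delta1 (Xs j)
        = Delta1 (Xs l) + ∑ j ∈ F2.erase l, Delta1 (Xs j) :=
      (Finset.add_sum_erase F2 (fun j => Delta1 (Xs j)) hlF2).symm
    have hA0 : 0 ≤ ∑ j ∈ F1, Delta1 (Xs j) := Finset.sum_nonneg fun j _ => hD1nn j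
    have hB0 : 0 ≤ ∑ j ∈ F2.erase l, Delta1 (Xs j) := Finset.sum_nonneg fun j _ => hD1nn j
    have hAT : ∑ j ∈ F1, Delta1 (Xs j) ≤ T := by linarith [hD1nn l]
    have hεA : ε * (∑ j ∈ F1, Delta1 (Xs j)) ≤ ε * T := mul_le_mul_of_nonneg_left hAT hε0.le
    have hirr' : (1 + ε) * T ≤ DeltaK (k - 1) X := by rw [← hTK]; exact hirr
    have hb1' : ∑ j ∈ F1, (1 + ε / 16) * Delta1 (Xs j)
        = (1 + ε / 16) * ∑ j ∈ F1, Delta1 (Xs j) := (Finset.mul_sum _ _ _).symm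
    rw [hb1'] at hb1
    nlinarith [hb1, hb2, hb3, h1, h2, h3, h4, hd1, hd2, hεA, hirr']
  -- nearest center to x
  obtain ⟨cs, hcsCi, hDpt⟩ := phi_point_exists hCiNe x
  obtain ⟨r, hri, hcr⟩ : ∃ r : Fin k, r.val < i ∧ c r = cs := by
    rw [hCi] at hcsCi
    obtain ⟨r, hr, hr2⟩ := Finset.mem_image.mp hcsCi
    exact ⟨r, (Finset.mem_filter.mp hr).2, hr2⟩
  have hcsCi' : cs ∈ Ci := by
    rw [hCi]
    exact hcr ▸ Finset.mem_image_of_mem c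
      (Finset.mem_filter.mpr ⟨Finset.mem_univ _, hri⟩)
  have hrl : r ≠ l := by intro h; rw [h] at hri; omega
  -- goodness of cs for cluster r
  have hbr : 16 * ((Xs r).card : ℝ) * ‖ctr (Xs r) - cs‖ ^ 2 ≤ ε * T := by
    have h1 := hgood r hri
    rw [hcr, phi_singleton_eq (hne r)] at h1
    have h2 := mul_le_mul_of_nonneg_left (hDlT r) hε0.le
    have h3 := hD1nn r
    linarith
  -- merged clusters are expensive: centroid separation
  have hMerge : ε * T * (((Xs r).card : ℝ) + ((Xs l).card : ℝ)) ≤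
      ‖ctr (Xs r) - ctr (Xs l)‖ ^ 2 * (((Xs r).card : ℝ) * ((Xs l).card : ℝ)) := by
    have hmr0 := hm0 r
    have hml0 := hm0 l
    have hs0 : (0 : ℝ) < ((Xs r).card : ℝ) + ((Xs l).card : ℝ) := by linarith
    have hsne : ((Xs r).card : ℝ) + ((Xs l).card : ℝ) ≠ 0 := ne_of_gt hs0
    set s : ℝ := ((Xs r).card : ℝ) + ((Xs l).card : ℝ) with hsdef
    set p : Pt d := (((Xs l).card : ℝ) / s) • ctr (Xs l)
        + (((Xs r).card : ℝ) / s) • ctr (Xs r) with hp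
    have hab : ((Xs l).card : ℝ) / s + ((Xs r).card : ℝ) / s = 1 := by
      field_simp [hsdef]; ring
    have hnr : ctr (Xs r) - p = (((Xs l).card : ℝ) / s) • (ctr (Xs r) - ctr (Xs l)) := by
      rw [hp, smul_sub]
      have : ctr (Xs r) = (1 : ℝ) • ctr (Xs r) := (one_smul ℝ _).symm
      calc ctr (Xs r) - ((((Xs l).card : ℝ) / s) • ctr (Xs l)
            + (((Xs r).card : ℝ) / s) • ctr (Xs r))
          = (1 - ((Xs r).card : ℝ) / s) • ctr (Xs r)
            - (((Xs l).card : ℝ) / s) • ctr (Xs l) := by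
            rw [sub_smul, one_smul]; abel
        _ = (((Xs l).card : ℝ) / s) • ctr (Xs r)
            - (((Xs l).card : ℝ) / s) • ctr (Xs l) := by
            rw [show (1 : ℝ) - ((Xs r).card : ℝ) / s = ((Xs l).card : ℝ) / s by
              field_simp [hsdef]; linarith]
    have hnl : ctr (Xs l) - p = (((Xs r).card : ℝ) / s) • (ctr (Xs l) - ctr (Xs r)) := by
      rw [hp, smul_sub]
      calc ctr (Xs l) - ((((Xs l).card : ℝ) / s) • ctr (Xs l)
            + (((Xs r).card : ℝ) / s) • ctr (Xs r))
          = (1 - ((Xs l).card : ℝ) / s) • ctr (Xs l)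
            - (((Xs r).card : ℝ) / s) • ctr (Xs r) := by
            rw [sub_smul, one_smul]; abel
        _ = (((Xs r).card : ℝ) / s) • ctr (Xs l)
            - (((Xs r).card : ℝ) / s) • ctr (Xs r) := by
            rw [show (1 : ℝ) - ((Xs l).card : ℝ) / s = ((Xs r).card : ℝ) / s by
              field_simp [hsdef]; linarith]
    have hnrv : ‖ctr (Xs r) - p‖ ^ 2
        = (((Xs l).card : ℝ) / s) ^ 2 * ‖ctr (Xs r) - ctr (Xs l)‖ ^ 2 := by
      rw [hnr, norm_smul, mul_pow]
      congr 1
      rw [Real.norm_eq_abs, sq_abs]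
    have hnlv : ‖ctr (Xs l) - p‖ ^ 2
        = (((Xs r).card : ℝ) / s) ^ 2 * ‖ctr (Xs r) - ctr (Xs l)‖ ^ 2 := by
      rw [hnl, norm_smul, mul_pow, norm_sub_rev]
      congr 1
      rw [Real.norm_eq_abs, sq_abs]
    -- the (k-1)-center set
    set G2 := Finset.univ.filter (fun j : Fin k => j ≠ r ∧ j ≠ l) with hG2
    set S := insert p (Finset.image (fun j => ctr (Xs j)) G2) with hS
    have hSne : S.Nonempty := ⟨p, by rw [hS]; exact Finset.mem_insert_self _ _⟩
    have hlr : l ≠ r := hrl.symm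
    have hG2sub : G2 ⊆ (Finset.univ.erase r).erase l := by
      intro j hj
      obtain ⟨-, hj1, hj2⟩ := Finset.mem_filter.mp hj
      exact Finset.mem_erase.mpr ⟨hj2, Finset.mem_erase.mpr ⟨hj1, Finset.mem_univ _⟩⟩
    have hG2card : G2.card ≤ k - 2 := by
      have h1 := Finset.card_le_card hG2sub
      have h2 : ((Finset.univ.erase r).erase l).card = k - 1 - 1 := by
        rw [Finset.card_erase_of_mem
          (Finset.mem_erase.mpr ⟨hlr, Finset.mem_univ _⟩),
          Finset.card_erase_of_mem (Finset.mem_univ _)]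
        simp
      omega
    have hScard : S.card ≤ k - 1 := by
      have h1 : S.card ≤ (Finset.image (fun j => ctr (Xs j)) G2).card + 1 := by
        rw [hS]; exact Finset.card_insert_le _ _
      have h2 : (Finset.image (fun j => ctr (Xs j)) G2).card ≤ G2.card :=
        Finset.card_image_le
      omega
    have h1 : DeltaK (k - 1) X ≤ Phi S X := deltaK_le_phi hSne hScard X
    have h2 : Phi S X = ∑ j, Phi S (Xs j) := by rw [← hunion]; exact phi_biUnion S Xs hdisj
    have hlmem : l ∈ Finset.univ.erase r :=
      Finset.mem_erase.mpr ⟨hlr, Finset.mem_univ _⟩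
    have h3 : ∑ j, Phi S (Xs j)
        = Phi S (Xs r) + ∑ j ∈ Finset.univ.erase r, Phi S (Xs j) :=
      (Finset.add_sum_erase Finset.univ (fun j => Phi S (Xs j)) (Finset.mem_univ r)).symm
    have h4 : ∑ j ∈ Finset.univ.erase r, Phi S (Xs j)
        = Phi S (Xs l) + ∑ j ∈ (Finset.univ.erase r).erase l, Phi S (Xs j) :=
      (Finset.add_sum_erase (Finset.univ.erase r) (fun j => Phi S (Xs j)) hlmem).symm
    have hpS : p ∈ S := by rw [hS]; exact Finset.mem_insert_self _ _
    have hbr' : Phi S (Xs r) ≤ Delta1 (Xs r) + ((Xs r).card : ℝ) * ‖ctr (Xs r) - p‖ ^ 2 := by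
      calc Phi S (Xs r) ≤ Phi {p} (Xs r) := phi_le_of_mem hpS _
        _ = Delta1 (Xs r) + ((Xs r).card : ℝ) * ‖ctr (Xs r) - p‖ ^ 2 :=
          phi_singleton_eq (hne r) p
    have hbl' : Phi S (Xs l) ≤ Delta1 (Xs l) + ((Xs l).card : ℝ) * ‖ctr (Xs l) - p‖ ^ 2 := by
      calc Phi S (Xs l) ≤ Phi {p} (Xs l) := phi_le_of_mem hpS _
        _ = Delta1 (Xs l) + ((Xs l).card : ℝ) * ‖ctr (Xs l) - p‖ ^ 2 :=
          phi_singleton_eq (hne l) p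
    have hrest : ∑ j ∈ (Finset.univ.erase r).erase l, Phi S (Xs j)
        ≤ ∑ j ∈ (Finset.univ.erase r).erase l, Delta1 (Xs j) := by
      refine Finset.sum_le_sum fun j hj => ?_
      obtain ⟨hjl, hjr'⟩ := Finset.mem_erase.mp hj
      obtain ⟨hjr, -⟩ := Finset.mem_erase.mp hjr'
      have hctr : ctr (Xs j) ∈ S := by
        rw [hS]
        exact Finset.mem_insert_of_mem (Finset.mem_image_of_mem _
          (Finset.mem_filter.mpr ⟨Finset.mem_univ _, hjr, hjl⟩))
      exact phi_le_of_mem hctr _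
    have hd3 : ∑ j, Delta1 (Xs j)
        = Delta1 (Xs r) + ∑ j ∈ Finset.univ.erase r, Delta1 (Xs j) :=
      (Finset.add_sum_erase Finset.univ (fun j => Delta1 (Xs j)) (Finset.mem_univ r)).symm
    have hd4 : ∑ j ∈ Finset.univ.erase r, Delta1 (Xs j)
        = Delta1 (Xs l) + ∑ j ∈ (Finset.univ.erase r).erase l, Delta1 (Xs j) :=
      (Finset.add_sum_erase (Finset.univ.erase r) (fun j => Delta1 (Xs j)) hlmem).symm
    have h7 : T = ∑ j, Delta1 (Xs j) := hT
    have hirr' : (1 + ε) * T ≤ DeltaK (k - 1) X := by rw [← hTK]; exact hirr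
    -- assemble
    have hcost : DeltaK (k - 1) X ≤ T
        + ((Xs r).card : ℝ) * ‖ctr (Xs r) - p‖ ^ 2
        + ((Xs l).card : ℝ) * ‖ctr (Xs l) - p‖ ^ 2 := by linarith
    have hεT : ε * T ≤ ((Xs r).card : ℝ) * ‖ctr (Xs r) - p‖ ^ 2
        + ((Xs l).card : ℝ) * ‖ctr (Xs l) - p‖ ^ 2 := by linarith
    rw [hnrv, hnlv, hsdef] at hεT
    rw [merge_iden hmr0 hml0] at hεT
    exact (le_div_iff₀ hs0).mp hεT
  -- positivity of the cost of the uncovered cluster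
  have hPos : 0 < Phi Ci (Xs l) := by
    rcases lt_or_eq_of_le hT0 with hTpos | hTzero
    · have := mul_pos hε0 hTpos
      linarith [hLow, hD1nn l]
    · -- degenerate case `T = 0`
      have hΔr : Delta1 (Xs r) = 0 := le_antisymm (by linarith [hDlT r]) (hD1nn r)
      have hb2 : ‖ctr (Xs r) - cs‖ ^ 2 ≤ 0 := by nlinarith [hm1 r, sq_nonneg ‖ctr (Xs r) - cs‖]
      have hb0' : ctr (Xs r) - cs = 0 := by
        have h0 : ‖ctr (Xs r) - cs‖ ^ 2 = 0 := le_antisymm hb2 (by positivity)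
        have h1 : ‖ctr (Xs r) - cs‖ = 0 := by
          have := sq_eq_zero_iff.mp h0
          exact this
        rwa [norm_eq_zero] at h1
      have hcs_eq : cs = ctr (Xs r) := by
        have := sub_eq_zero.mp hb0'
        exact this.symm
      obtain ⟨y, hy⟩ := hne r
      have hsum0 : ∑ z ∈ Xs r, ‖z - ctr (Xs r)‖ ^ 2 = 0 := by
        rw [← delta1_eq]; exact hΔr
      have hyc : y = ctr (Xs r) := by
        have h2 := (Finset.sum_eq_zero_iff_of_nonneg
          (fun z _ => by positivity)).mp hsum0 y hy
        have h3 : ‖y - ctr (Xs r)‖ = 0 := by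
          have := sq_eq_zero_iff.mp h2
          exact this
        rw [norm_eq_zero, sub_eq_zero] at h3
        exact h3
      have hxcs : x ≠ cs := by
        intro h
        have hxr : x ∈ Xs r := by rw [h, hcs_eq, ← hyc]; exact hy
        exact Finset.disjoint_left.mp (hdisj l r hrl.symm) hx hxr
      have hD2 : 0 < ‖x - cs‖ ^ 2 := by
        have h5 : 0 < ‖x - cs‖ := norm_pos_iff.mpr (sub_ne_zero.mpr hxcs)
        positivity
      have herase := phi_erase Ci hx
      have := phi_nonneg Ci ((Xs l).erase x)
      rw [hDpt] at herase
      linarith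
  -- triangle inequalities
  have htriA : ‖ctr (Xs l) - cs‖ ≤ 2 * ‖x - cs‖ + ‖ctr (Xs r) - cs‖ := by
    have t1 : ‖ctr (Xs l) - cs‖ ≤ ‖ctr (Xs l) - x‖ + ‖x - cs‖ :=
      norm_sub_le_norm_sub_add_norm_sub _ x _
    have t2 : ‖ctr (Xs l) - x‖ = ‖x - ctr (Xs l)‖ := norm_sub_rev _ _
    have t3 : ‖x - ctr (Xs r)‖ ≤ ‖x - cs‖ + ‖cs - ctr (Xs r)‖ :=
      norm_sub_le_norm_sub_add_norm_sub _ cs _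
    have t4 : ‖cs - ctr (Xs r)‖ = ‖ctr (Xs r) - cs‖ := norm_sub_rev _ _
    have t5 := hassign r
    linarith
  have htriM : ‖ctr (Xs r) - ctr (Xs l)‖ ≤ 2 * ‖x - cs‖ + 2 * ‖ctr (Xs r) - cs‖ := by
    have t1 : ‖ctr (Xs r) - ctr (Xs l)‖ ≤ ‖ctr (Xs r) - cs‖ + ‖cs - ctr (Xs l)‖ :=
      norm_sub_le_norm_sub_add_norm_sub _ cs _
    have t2 : ‖cs - ctr (Xs l)‖ = ‖ctr (Xs l) - cs‖ := norm_sub_rev _ _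
    linarith [htriA]
  -- upper bound for the cost of the uncovered cluster
  have hUp : Phi Ci (Xs l) ≤ Delta1 (Xs l) + ((Xs l).card : ℝ) * ‖ctr (Xs l) - cs‖ ^ 2 := by
    calc Phi Ci (Xs l) ≤ Phi {cs} (Xs l) := phi_le_of_mem hcsCi' _
      _ = Delta1 (Xs l) + ((Xs l).card : ℝ) * ‖ctr (Xs l) - cs‖ ^ 2 :=
        phi_singleton_eq (hne l) cs
  -- numeric conclusion
  have hKey : ε * Phi Ci (Xs l) ≤ 64 * (((Xs l).card : ℝ) * ‖x - cs‖ ^ 2) :=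
    numeric hε0 hε hT0 (hm1 r) (hm1 l) (hD1nn l) (hDlT l)
      (norm_nonneg _) (norm_nonneg _) (norm_nonneg _) (norm_nonneg _)
      hbr hMerge htriA htriM hUp
  rw [hDpt, le_div_iff₀ hPos]
  have hml0 : (0 : ℝ) < ((Xs l).card : ℝ) := hm0 l
  have h64 : (0 : ℝ) < 64 * ((Xs l).card : ℝ) := by linarith
  calc ε / 64 * (1 / ((Xs l).card : ℝ)) * Phi Ci (Xs l)
      = (ε * Phi Ci (Xs l)) / (64 * ((Xs l).card : ℝ)) := by
        field_simp
    _ ≤ ‖x - cs‖ ^ 2 := by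
        rw [div_le_iff₀ h64]
        nlinarith [hKey]
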